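/- Let C ⊆ ℤ^n_{≥0} be the complex set of a weakly reversible reaction network G, and consider the network G̃ with complexes y + A_y and reactions y + A_y → y' + A_{y'}. For any x ∈ ℤ^n_{≥0} and complex y with x ≥ y, the closed irreducible set of the associated continuous-time Markov chain containing the state (x, e_y) ∈ ℤ^n_{≥0} × ℤ^m_{≥0} is exactly {(x + ỹ − y, e_{ỹ}) : ỹ ∈ C_y}, where C_y is the connected component of the reaction graph (C,R) containing y, provided the kinetics satisfies λ̃_{y+A_y → y'+A_{y'}}(x,u) = λ_{y→y'}(x)·u_{A_y} with λ_{y→y'}(x̃) > 0 iff x̃ ≥ y. -/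

import Mathlib

/-- For a weakly reversible network `G` and the extended network
`G̃` (complexes `y + A_y`, reactions `y + A_y → y' + A_{y'}` with rates
`λ̃(x,u) = λ_{y→y'}(x) u_{A_y}` where `λ_{y→y'}(x̃) > 0 iff x̃ ≥ y`), for any
state `x ≥ y` with `y ∈ C`, the closed irreducible set of the associated CTMC
containing `(x, e_y)` is exactly `{(x + ỹ - y, e_{ỹ}) : ỹ ∈ C_y}`, where `C_y`
is the connected component of the reaction graph containing `y`. -/
theorem tilde_closed_irreducible_set
    (n : ℕ) [DecidableEq (Fin n → ℤ)]
    (C : Finset (Fin n → ℤ)) (R : Finset ((Fin n → ℤ) × (Fin n → ℤ)))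
    (hCnn : ∀ y ∈ C, (0 : Fin n → ℤ) ≤ y)
    (hR : ∀ e ∈ R, e.1 ∈ C ∧ e.2 ∈ C ∧ e.1 ≠ e.2)
    (hwr : ∀ e ∈ R, Relation.ReflTransGen (fun a b => (a, b) ∈ R) e.2 e.1)
    (Λ : (Fin n → ℤ) × (Fin n → ℤ) → (Fin n → ℤ) → ℝ)
    (hΛnn : ∀ e ∈ R, ∀ xt : Fin n → ℤ, 0 ≤ Λ e xt)
    (hΛ : ∀ e ∈ R, ∀ xt : Fin n → ℤ, 0 < Λ e xt ↔ e.1 ≤ xt)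
    (Step : ((Fin n → ℤ) × ((Fin n → ℤ) → ℤ)) →
            ((Fin n → ℤ) × ((Fin n → ℤ) → ℤ)) → Prop)
    (hStep : ∀ p q : (Fin n → ℤ) × ((Fin n → ℤ) → ℤ),
      Step p q ↔ ∃ e ∈ R, 0 < Λ e p.1 * (p.2 e.1 : ℝ) ∧
        q.1 = p.1 + e.2 - e.1 ∧
        q.2 = fun z => p.2 z - (if z = e.1 then 1 else 0)
          + (if z = e.2 then 1 else 0))
    (y : Fin n → ℤ) (hy : y ∈ C)
    (x : Fin n → ℤ) (hx : y ≤ x)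
    (Γ : Set ((Fin n → ℤ) × ((Fin n → ℤ) → ℤ)))
    (hΓ : Γ = {p | ∃ yt ∈ C,
      Relation.ReflTransGen (fun a b => (a, b) ∈ R ∨ (b, a) ∈ R) y yt ∧
      p = (x + yt - y, fun z => if z = yt then 1 else 0)}) :
    ∀ p ∈ Γ, ∀ q : (Fin n → ℤ) × ((Fin n → ℤ) → ℤ),
      Relation.ReflTransGen Step p q ↔ q ∈ Γ := by

  subst hΓ
  -- undirected reflexive-transitive closure implies directed one (weak reversibility)
  have dir : ∀ a b, Relation.ReflTransGen (fun a b => (a, b) ∈ R ∨ (b, a) ∈ R) a b →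
      Relation.ReflTransGen (fun a b => (a, b) ∈ R) a b := by
    intro a b h
    induction h with
    | refl => exact .refl
    | tail _ hcd ih =>
        rcases hcd with h1 | h1
        · exact ih.tail h1
        · exact ih.trans (hwr _ h1)
  have usymm : ∀ a b, Relation.ReflTransGen (fun a b => (a, b) ∈ R ∨ (b, a) ∈ R) a b →
      Relation.ReflTransGen (fun a b => (a, b) ∈ R ∨ (b, a) ∈ R) b a := by
    have : Symmetric (fun a b => (a, b) ∈ R ∨ (b, a) ∈ R) := fun a b h => h.symm
    exact fun a b h => (@Relation.ReflTransGen.stdSymm _ _ ⟨this⟩).symm a b h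
  -- a single directed reaction gives a Step
  have key : ∀ c d, (c, d) ∈ R →
      Step (x + c - y, fun z => if z = c then (1 : ℤ) else 0)
           (x + d - y, fun z => if z = d then (1 : ℤ) else 0) := by
    intro c d hcd
    rw [hStep]
    refine ⟨(c, d), hcd, ?_, ?_, ?_⟩
    · have hpos : (0 : ℝ) < Λ (c, d) (x + c - y) := by
        rw [hΛ _ hcd]
        intro i
        simp only [Pi.add_apply, Pi.sub_apply]
        linarith [hx i]
      simpa using hpos
    · show x + d - y = (x + c - y) + d - c
      ring
    · funext z
      simp
  have reach : ∀ a b, Relation.ReflTransGen (fun a b => (a, b) ∈ R) a b →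
      Relation.ReflTransGen Step (x + a - y, fun z => if z = a then (1 : ℤ) else 0)
        (x + b - y, fun z => if z = b then (1 : ℤ) else 0) := by
    intro a b h
    induction h with
    | refl => exact .refl
    | tail _ h ih => exact ih.tail (key _ _ h)
  -- closedness: one Step preserves membership
  have closed : ∀ q r : (Fin n → ℤ) × ((Fin n → ℤ) → ℤ),
      q ∈ {p | ∃ yt ∈ C,
        Relation.ReflTransGen (fun a b => (a, b) ∈ R ∨ (b, a) ∈ R) y yt ∧
        p = (x + yt - y, fun z => if z = yt then 1 else 0)} → Step q r →
      r ∈ {p | ∃ yt ∈ C,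
        Relation.ReflTransGen (fun a b => (a, b) ∈ R ∨ (b, a) ∈ R) y yt ∧
        p = (x + yt - y, fun z => if z = yt then 1 else 0)} := by
    intro q r hq hstep
    obtain ⟨yt, hytC, hconn, rfl⟩ := hq
    rw [hStep] at hstep
    obtain ⟨e, heR, hpos, hq1, hq2⟩ := hstep
    have he1 : e.1 = yt := by
      by_contra h
      simp only [if_neg h] at hpos
      simp at hpos
    refine ⟨e.2, (hR e heR).2.1, hconn.tail (Or.inl ?_), ?_⟩
    · rw [← he1]; exact heR
    · refine Prod.ext ?_ ?_
      · rw [hq1, he1]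
        show (x + yt - y) + e.2 - yt = x + e.2 - y
        ring
      · rw [hq2]
        funext z
        simp [he1]
  intro p hp q
  constructor
  · intro h
    induction h with
    | refl => exact hp
    | tail _ hs ih => exact closed _ _ ih hs
  · intro hq
    obtain ⟨a, haC, hca, rfl⟩ := hp
    obtain ⟨b, hbC, hcb, rfl⟩ := hq
    exact reach a b (dir a b ((usymm _ _ hca).trans hcb))
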